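/- arXiv:2204.12449 — 3 statements merged into one kernel-verified Lean document; each statement's English description precedes it below -/
import Mathlib

section
/- Equivalence of the thinning-based and classical compound Poisson INGARCH(1,1) models: let G be a probability distribution on ℕ with finite mean μ > 0, and let τ > 0, κ > 0, 0 ≤ β < 1, η > 0, X_0 ∈ ℕ be fixed. Define the thinning-based process {X_t}_{t≥0} by: E_0 ~ Poisson(η); recursively, given the past, L_t = β ∘ E_t (binomial thinning), A_t = E_t − L_t, C_t = κ ⋆ X_t (Poisson thinning), E_{t+1} = L_t + C_t, and X_{t+1} = ψ *_G (I_{t+1} + A_{t+1}) (G-compounding), where the I_t are i.i.d. Poisson(τ) and all thinnings, compoundings and draws are conditionally independent given the past. Define the classical CP-INGARCH(1,1) process {X'_t}_{t≥0} by: X'_0 = X_0, λ_0 = μ·(τ + (1 − β)η), and for t ≥ 1, given the past, N_t ~ Poisson(λ_t/μ), X'_t = Σ_{i=1}^{N_t} Z_{i,t} with Z_{i,t} i.i.d. ~ G, and λ_t = ν + α X'_{t−1} + β λ_{t−1}, where ν = μ(1 − β)τ and α = μ(1 − β)κ. Then the two processes have the same distribution. -/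
open ProbabilityTheory
open scoped NNReal ENNReal

/-- Binomial thinning `β ∘ n`: the number of successes among `n` Bernoulli(β) trials. -/
noncomputable def binThin (b : ℝ≥0∞) (hb : b ≤ 1) (n : ℕ) : PMF ℕ :=
  (PMF.binomial b.toNNReal (by simpa using ENNReal.toNNReal_mono ENNReal.one_ne_top hb) n).map Fin.val

/-- `G`-compounding `ψ *_G n`: the distribution of the sum of `n` i.i.d. draws from `G`. -/
noncomputable def compG (G : PMF ℕ) : ℕ → PMF ℕ
  | 0 => PMF.pure 0
  | n + 1 => (compG G n).bind fun s => G.map fun z => s + z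

/-- One step of the thinning-based CP-INGARCH(1,1) process on the state `(Xₜ, Lₜ)`: draw
`Cₜ = κ ⋆ Xₜ` (i.e. `Cₜ | Xₜ ~ Pois(κ·Xₜ)`), set `Eₜ₊₁ = Lₜ + Cₜ`, draw `Lₜ₊₁ = β ∘ Eₜ₊₁`,
set `Aₜ₊₁ = Eₜ₊₁ - Lₜ₊₁`, draw `Iₜ₊₁ ~ Pois(τ)` and set `Xₜ₊₁ = ψ *_G (Iₜ₊₁ + Aₜ₊₁)`. -/
noncomputable def cpThinStep (G : PMF ℕ) (τ κ : ℝ≥0) (b : ℝ≥0∞) (hb : b ≤ 1)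
    (s : ℕ × ℕ) : PMF (ℕ × ℕ) :=
  (poissonPMF (κ * s.1)).bind fun c =>
    (binThin b hb (s.2 + c)).bind fun l' =>
      (poissonPMF τ).bind fun i' =>
        (compG G (i' + ((s.2 + c) - l'))).map fun x' => (x', l')

/-- Initialization of the thinning-based process: `X₀` fixed, `E₀ ~ Pois(η)`, `L₀ = β ∘ E₀`. -/
noncomputable def cpThinInit (η : ℝ≥0) (b : ℝ≥0∞) (hb : b ≤ 1) (x0 : ℕ) : PMF (ℕ × ℕ) :=
  (poissonPMF η).bind fun e => (binThin b hb e).map fun l => (x0, l)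

/-- Law of the trajectory `(X₀, …, Xₙ)` of the thinning-based CP-INGARCH(1,1) process. -/
noncomputable def cpThinPath (G : PMF ℕ) (τ κ η : ℝ≥0) (b : ℝ≥0∞) (hb : b ≤ 1) (x0 : ℕ) :
    ℕ → PMF (List ℕ × (ℕ × ℕ))
  | 0 => (cpThinInit η b hb x0).map fun s => ([s.1], s)
  | n + 1 => (cpThinPath G τ κ η b hb x0 n).bind fun h =>
      (cpThinStep G τ κ b hb h.2).map fun s' => (h.1 ++ [s'.1], s')

/-- One step of the classical CP-INGARCH(1,1) process on the state `(X'ₜ, λₜ)`: set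
`λₜ₊₁ = ν + α·X'ₜ + β·λₜ`, draw `Nₜ₊₁ ~ Pois(λₜ₊₁/μ)` and `X'ₜ₊₁ = ∑_{i=1}^{Nₜ₊₁} Zᵢ` with
`Zᵢ` i.i.d. `~ G`. -/
noncomputable def cpClassicalStep (G : PMF ℕ) (μ ν α β : ℝ≥0) (s : ℕ × ℝ≥0) :
    PMF (ℕ × ℝ≥0) :=
  (poissonPMF ((ν + α * s.1 + β * s.2) / μ)).bind fun n =>
    (compG G n).map fun x' => (x', ν + α * s.1 + β * s.2)

/-- Law of the trajectory `(X'₀, …, X'ₙ)` of the classical CP-INGARCH(1,1) process. -/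
noncomputable def cpClassicalPath (G : PMF ℕ) (μ ν α β : ℝ≥0) (x0 : ℕ) (lam0 : ℝ≥0) :
    ℕ → PMF (List ℕ × (ℕ × ℝ≥0))
  | 0 => PMF.pure ([x0], (x0, lam0))
  | n + 1 => (cpClassicalPath G μ ν α β x0 lam0 n).bind fun h =>
      (cpClassicalStep G μ ν α β h.2).map fun s' => (h.1 ++ [s'.1], s')

lemma poissonPMF_apply (r : ℝ≥0) (n : ℕ) :
    poissonPMF r n = ENNReal.ofReal (Real.exp (-r) * r ^ n / (Nat.factorial n)) := rfl

lemma pois_real_conv (a c : ℝ) (n : ℕ) :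
    ∑ l ∈ Finset.range (n+1),
      (Real.exp (-a) * a ^ l / (Nat.factorial l)) *
        (Real.exp (-c) * c ^ (n - l) / (Nat.factorial (n-l)))
      = Real.exp (-(a+c)) * (a+c) ^ n / (Nat.factorial n) := by
  rw [add_pow]
  rw [Finset.mul_sum, Finset.sum_div]
  refine Finset.sum_congr rfl fun l hl => ?_
  have hln : l ≤ n := Nat.lt_succ_iff.mp (Finset.mem_range.mp hl)
  have hfact : (n.choose l : ℝ) * (Nat.factorial l) * (Nat.factorial (n-l)) = (Nat.factorial n) := by
    exact_mod_cast congrArg (Nat.cast : ℕ → ℝ) (Nat.choose_mul_factorial_mul_factorial hln)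
  have h1 : Real.exp (-(a+c)) = Real.exp (-a) * Real.exp (-c) := by
    rw [← Real.exp_add]; ring_nf
  rw [h1]
  field_simp
  rw [← hfact]
  ring

lemma pois_conv_pair (a c : ℝ≥0) :
    (poissonPMF a).bind (fun l => (poissonPMF c).map (fun i => l + i)) = poissonPMF (a+c) := by
  ext n
  rw [PMF.bind_apply, poissonPMF_apply]
  have hinner : ∀ l : ℕ, (PMF.map (fun i => l + i) (poissonPMF c)) n
      = if l ≤ n then poissonPMF c (n - l) else 0 := by
    intro l
    rw [PMF.map_apply]
    by_cases hl : l ≤ n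
    · rw [if_pos hl]
      rw [tsum_eq_single (n - l)]
      · rw [if_pos (by omega)]
      · intro i hi
        rw [if_neg (by omega)]
    · rw [if_neg hl]
      refine ENNReal.tsum_eq_zero.mpr fun i => ?_
      rw [if_neg (by omega)]
  calc (∑' l, poissonPMF a l * (PMF.map (fun i => l + i) (poissonPMF c)) n)
      = ∑ l ∈ Finset.range (n+1), poissonPMF a l *
          (if l ≤ n then poissonPMF c (n - l) else 0) := by
        rw [tsum_eq_sum (s := Finset.range (n+1))]
        · exact Finset.sum_congr rfl fun l _ => by rw [hinner l]
        · intro l hl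
          rw [hinner l, if_neg (by simpa using hl), mul_zero]
    _ = ∑ l ∈ Finset.range (n+1), ENNReal.ofReal
          ((Real.exp (-a) * (a:ℝ) ^ l / (Nat.factorial l)) *
            (Real.exp (-c) * (c:ℝ) ^ (n-l) / (Nat.factorial (n-l)))) := by
        refine Finset.sum_congr rfl fun l hl => ?_
        rw [if_pos (Nat.lt_succ_iff.mp (Finset.mem_range.mp hl))]
        rw [poissonPMF_apply, poissonPMF_apply, ← ENNReal.ofReal_mul]
        positivity
    _ = ENNReal.ofReal (Real.exp (-((a:ℝ)+(c:ℝ))) * ((a:ℝ)+(c:ℝ)) ^ n / (Nat.factorial n)) := by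
        rw [← ENNReal.ofReal_sum_of_nonneg, pois_real_conv]
        intro l _
        positivity
    _ = ENNReal.ofReal (Real.exp (-(((a+c):ℝ≥0):ℝ)) * (((a+c):ℝ≥0):ℝ) ^ n / (Nat.factorial n)) := by
        push_cast
        ring_nf


lemma binThin_apply (b : ℝ≥0∞) (hb : b ≤ 1) (e k : ℕ) :
    binThin b hb e k = if k ≤ e then b ^ k * (1-b) ^ (e-k) * (e.choose k) else 0 := by
  rw [binThin, PMF.map_apply]
  by_cases hk : k ≤ e
  · rw [if_pos hk]
    rw [tsum_eq_single (⟨k, by omega⟩ : Fin (e+1))]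
    · rw [if_pos rfl]
      erw [PMF.binomial_apply]
      simp [ENNReal.coe_toNNReal (ne_top_of_le_ne_top ENNReal.one_ne_top hb)]
    · intro i hi
      rw [if_neg]
      intro h
      exact hi (by ext; simp [← h])
  · rw [if_neg hk]
    refine ENNReal.tsum_eq_zero.mpr fun i => ?_
    rw [if_neg (by omega)]

lemma pois_real_thin (m g : ℝ) (l a : ℕ) :
    (Real.exp (-m) * m ^ (l+a) / (Nat.factorial (l+a))) *
      (g ^ l * (1-g) ^ a * ((l+a).choose l)) =
    (Real.exp (-(g*m)) * (g*m) ^ l / (Nat.factorial l)) *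
      (Real.exp (-((1-g)*m)) * ((1-g)*m) ^ a / (Nat.factorial a)) := by
  have h1 : Real.exp (-(g*m)) * Real.exp (-((1-g)*m)) = Real.exp (-m) := by
    rw [← Real.exp_add]; ring_nf
  have hfact : ((l+a).choose l : ℝ) * (Nat.factorial l) * (Nat.factorial a)
      = (Nat.factorial (l+a)) := by
    have := Nat.choose_mul_factorial_mul_factorial (show l ≤ l + a by omega)
    simp only [Nat.add_sub_cancel_left] at this
    exact_mod_cast congrArg (Nat.cast : ℕ → ℝ) this
  rw [mul_pow, mul_pow, ← h1, pow_add]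
  field_simp
  rw [← hfact]
  ring

lemma pois_thin_pair (m g : ℝ≥0) (hg : g ≤ 1) (hb : (g : ℝ≥0∞) ≤ 1) :
    (poissonPMF m).bind (fun e => (binThin (g : ℝ≥0∞) hb e).map (fun l => (l, e - l)))
      = (poissonPMF (g*m)).bind (fun l => (poissonPMF ((1-g)*m)).map (fun a => (l, a))) := by
  ext ⟨l, a⟩
  rw [PMF.bind_apply, PMF.bind_apply]
  have hL : ∀ e : ℕ, (PMF.map (fun l => (l, e - l)) (binThin (g:ℝ≥0∞) hb e)) (l, a)
      = if a = e - l then binThin (g:ℝ≥0∞) hb e l else 0 := by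
    intro e
    rw [PMF.map_apply, tsum_eq_single l]
    · by_cases h : a = e - l <;> simp [Prod.ext_iff, h]
    · intro k hk
      rw [if_neg (by simp [Prod.ext_iff]; tauto)]
  have hR : ∀ l' : ℕ, (PMF.map (fun a => (l', a)) (poissonPMF ((1-g)*m))) (l, a)
      = if l = l' then poissonPMF ((1-g)*m) a else 0 := by
    intro l'
    rw [PMF.map_apply, tsum_eq_single a]
    · by_cases h : l = l' <;> simp [Prod.ext_iff, h]
    · intro k hk
      rw [if_neg (by simp [Prod.ext_iff]; tauto)]
  calc (∑' e, poissonPMF m e * (PMF.map (fun l => (l, e - l)) (binThin (g:ℝ≥0∞) hb e)) (l, a))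
      = poissonPMF m (l+a) * (PMF.map (fun k => (k, (l+a) - k)) (binThin (g:ℝ≥0∞) hb (l+a))) (l, a) := by
        refine tsum_eq_single (l+a) fun e he => ?_
        rw [hL e]
        split_ifs with h1
        · rw [binThin_apply, if_neg (by omega), mul_zero]
        · rw [mul_zero]
    _ = poissonPMF m (l+a) * binThin (g:ℝ≥0∞) hb (l+a) l := by
        rw [hL (l+a), if_pos (by omega)]
    _ = ENNReal.ofReal ((Real.exp (-(m:ℝ)) * (m:ℝ) ^ (l+a) / (Nat.factorial (l+a))) *
          ((g:ℝ) ^ l * (1-(g:ℝ)) ^ a * ((l+a).choose l))) := by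
        rw [binThin_apply, if_pos (by omega), poissonPMF_apply]
        have h1 : (1 : ℝ≥0∞) - (g:ℝ≥0∞) = ((1 - g : ℝ≥0) : ℝ≥0∞) := by
          rw [ENNReal.coe_sub, ENNReal.coe_one]
        have h2 : (l + a) - l = a := by omega
        rw [h1, h2, ← ENNReal.coe_pow, ← ENNReal.coe_pow, ← ENNReal.coe_mul,
          ← ENNReal.ofReal_coe_nnreal, ← ENNReal.ofReal_natCast ((l+a).choose l),
          ← ENNReal.ofReal_mul (by positivity), ← ENNReal.ofReal_mul (by positivity)]
        congr 1
        push_cast [NNReal.coe_sub hg]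
        ring
    _ = ENNReal.ofReal ((Real.exp (-((g:ℝ)*(m:ℝ))) * ((g:ℝ)*(m:ℝ)) ^ l / (Nat.factorial l)) *
          (Real.exp (-((1-(g:ℝ))*(m:ℝ))) * ((1-(g:ℝ))*(m:ℝ)) ^ a / (Nat.factorial a))) := by
        rw [pois_real_thin]
    _ = poissonPMF (g*m) l * poissonPMF ((1-g)*m) a := by
        rw [poissonPMF_apply, poissonPMF_apply, ← ENNReal.ofReal_mul (by positivity)]
        congr 1
        push_cast [NNReal.coe_sub hg]
        ring
    _ = ∑' l', poissonPMF (g*m) l' * (PMF.map (fun a => (l', a)) (poissonPMF ((1-g)*m))) (l, a) := by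
        rw [tsum_eq_single l]
        · rw [hR l, if_pos rfl]
        · intro l' hl'
          rw [hR l', if_neg (by tauto), mul_zero]

noncomputable def gfun (mu tau beta lam : ℝ≥0) : ℝ≥0 := beta * ((lam / mu - tau) / (1 - beta))

lemma tau_le_div {mu tau lam : ℝ≥0} (hmu : 0 < mu) (h : mu * tau ≤ lam) : tau ≤ lam / mu := by
  rw [le_div_iff₀ hmu]
  rwa [mul_comm]

lemma gfun_coe {mu tau beta lam : ℝ≥0} (hmu : 0 < mu) (hbeta : beta < 1)
    (h : mu * tau ≤ lam) :
    ((gfun mu tau beta lam : ℝ≥0) : ℝ) = beta * (((lam:ℝ) / mu - tau) / (1 - beta)) := by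
  rw [gfun, NNReal.coe_mul, NNReal.coe_div, NNReal.coe_sub (tau_le_div hmu h),
    NNReal.coe_sub hbeta.le, NNReal.coe_div, NNReal.coe_one]

section arith
variable {mu tau kappa eta beta lam : ℝ≥0} (hmu : 0 < mu) (hbeta : beta < 1)
include hmu hbeta

lemma ar0 : gfun mu tau beta (mu * (tau + (1 - beta) * eta)) = beta * eta := by
  have h : mu * tau ≤ mu * (tau + (1 - beta) * eta) := mul_le_mul_right le_self_add mu
  apply NNReal.coe_injective
  rw [gfun_coe hmu hbeta h]
  have h1 : (1:ℝ) - beta ≠ 0 := by have : (beta:ℝ) < 1 := hbeta; linarith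
  have hmu' : (mu:ℝ) ≠ 0 := by exact_mod_cast hmu.ne'
  push_cast [NNReal.coe_sub hbeta.le]
  field_simp
  ring

lemma ar3 (x : ℕ) (h : mu * tau ≤ lam) :
    mu * tau ≤ mu * (1-beta) * tau + mu * (1-beta) * kappa * x + beta * lam := by
  rw [← NNReal.coe_le_coe] at h ⊢
  push_cast [NNReal.coe_sub hbeta.le] at h ⊢
  have hb1 : (beta : ℝ) ≤ 1 := hbeta.le
  have hb0 : (0 : ℝ) ≤ beta := beta.2
  have h2 : (0:ℝ) ≤ (beta:ℝ) * ((lam:ℝ) - mu * tau) := by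
    apply mul_nonneg hb0; linarith
  have h3 : (0:ℝ) ≤ (mu:ℝ) * (1 - beta) * kappa * x := by
    have : (0:ℝ) ≤ 1 - (beta:ℝ) := by linarith
    positivity
  nlinarith

lemma ar1 (x : ℕ) (h : mu * tau ≤ lam) :
    (mu * (1-beta) * tau + mu * (1-beta) * kappa * x + beta * lam) / mu
      = tau + (1-beta) * (gfun mu tau beta lam + kappa * x) := by
  apply NNReal.coe_injective
  have h1 : (1:ℝ) - beta ≠ 0 := by have : (beta:ℝ) < 1 := hbeta; linarith
  have hmu' : (mu:ℝ) ≠ 0 := by exact_mod_cast hmu.ne'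
  push_cast [NNReal.coe_sub hbeta.le, gfun_coe hmu hbeta h]
  field_simp
  ring

lemma ar2 (x : ℕ) (h : mu * tau ≤ lam) :
    gfun mu tau beta (mu * (1-beta) * tau + mu * (1-beta) * kappa * x + beta * lam)
      = beta * (gfun mu tau beta lam + kappa * x) := by
  apply NNReal.coe_injective
  rw [gfun_coe hmu hbeta (ar3 hmu hbeta x h)]
  have h1 : (1:ℝ) - beta ≠ 0 := by have : (beta:ℝ) < 1 := hbeta; linarith
  have hmu' : (mu:ℝ) ≠ 0 := by exact_mod_cast hmu.ne'
  push_cast [NNReal.coe_sub hbeta.le, gfun_coe hmu hbeta h]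
  field_simp
  try ring
  try exact Or.inl trivial

end arith

lemma pmf_bind_congr {α β : Type*} (p : PMF α) (f g : α → PMF β)
    (h : ∀ a ∈ p.support, f a = g a) : p.bind f = p.bind g := by
  ext b
  simp only [PMF.bind_apply]
  refine tsum_congr fun a => ?_
  by_cases ha : p a = 0
  · simp [ha]
  · rw [h a ha]

lemma pois_conv_bind {α : Type*} (a c : ℝ≥0) (F : ℕ → PMF α) :
    (poissonPMF a).bind (fun l => (poissonPMF c).bind (fun i => F (l + i)))
      = (poissonPMF (a + c)).bind F := by
  rw [← pois_conv_pair a c, PMF.bind_bind]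
  simp only [PMF.bind_map, Function.comp_def]

lemma pois_conv_bind' {α : Type*} (a c : ℝ≥0) (F : ℕ → PMF α) :
    (poissonPMF a).bind (fun l => (poissonPMF c).bind (fun i => F (i + l)))
      = (poissonPMF (c + a)).bind F := by
  rw [← pois_conv_bind c a F]
  rw [PMF.bind_comm]

lemma pois_thin_bind {α : Type*} (m g : ℝ≥0) (hg : g ≤ 1) (hb : (g : ℝ≥0∞) ≤ 1)
    (F : ℕ → ℕ → PMF α) :
    (poissonPMF m).bind (fun e => (binThin (g : ℝ≥0∞) hb e).bind (fun l => F l (e - l)))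
      = (poissonPMF (g * m)).bind (fun l => (poissonPMF ((1 - g) * m)).bind (fun a => F l a)) := by
  have := congrArg (fun p : PMF (ℕ × ℕ) => p.bind (fun q => F q.1 q.2))
    (pois_thin_pair m g hg hb)
  simpa only [PMF.bind_bind, PMF.bind_map, Function.comp_def] using this

lemma swap_bind_map {α β γ : Type*} (p : PMF α) (q : PMF β) (f : β → α → γ) :
    p.bind (fun a => q.map (fun b => f b a)) = q.bind (fun b => p.map (fun a => f b a)) := by
  simp only [PMF.map, Function.comp_def]
  rw [PMF.bind_comm]

lemma core_step {α : Type*} (G : PMF ℕ) (μ τ κ β : ℝ≥0) (hμ : 0 < μ) (hβ : β < 1)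
    (hb : (β:ℝ≥0∞) ≤ 1) (F : ℕ → ℕ → α) (x : ℕ) (lam : ℝ≥0) (hlam : μ * τ ≤ lam) :
    (poissonPMF (gfun μ τ β lam)).bind
        (fun l => (cpThinStep G τ κ (β:ℝ≥0∞) hb (x, l)).map (fun s => F s.1 s.2))
      = (cpClassicalStep G μ (μ*(1-β)*τ) (μ*(1-β)*κ) β (x, lam)).bind
        (fun s => (poissonPMF (gfun μ τ β s.2)).map (fun l => F s.1 l)) := by
  have hLHS :
      (poissonPMF (gfun μ τ β lam)).bind
        (fun l => (cpThinStep G τ κ (β:ℝ≥0∞) hb (x, l)).map (fun s => F s.1 s.2))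
      = (poissonPMF (τ + (1-β) * (gfun μ τ β lam + κ * x))).bind fun n =>
          (compG G n).bind fun x' =>
            (poissonPMF (β * (gfun μ τ β lam + κ * x))).map fun l' => F x' l' := by
    simp only [cpThinStep, PMF.map_bind, PMF.map_comp, Function.comp_def]
    rw [pois_conv_bind (gfun μ τ β lam) (κ * x)
      (fun e => (binThin (β:ℝ≥0∞) hb e).bind fun l' =>
        (poissonPMF τ).bind fun i => (compG G (i + (e - l'))).map fun x' => F x' l')]
    rw [pois_thin_bind (gfun μ τ β lam + κ * x) β hβ.le hb
      (fun l' a => (poissonPMF τ).bind fun i => (compG G (i + a)).map fun x' => F x' l')]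
    have h1 : ∀ l' : ℕ,
        (poissonPMF ((1-β) * (gfun μ τ β lam + κ * x))).bind
          (fun a => (poissonPMF τ).bind fun i => (compG G (i + a)).map fun x' => F x' l')
        = (poissonPMF (τ + (1-β) * (gfun μ τ β lam + κ * x))).bind
          (fun n => (compG G n).map fun x' => F x' l') := by
      intro l'
      exact pois_conv_bind' _ _ (fun n => (compG G n).map fun x' => F x' l')
    rw [funext h1]
    rw [PMF.bind_comm]
    refine congrArg (PMF.bind _) (funext fun n => ?_)
    exact swap_bind_map _ _ (fun x' l' => F x' l')
  rw [hLHS]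
  simp only [cpClassicalStep, PMF.bind_bind, PMF.bind_map, Function.comp_def]
  rw [ar1 hμ hβ x hlam, ar2 hμ hβ x hlam]

lemma classical_support_lam (G : PMF ℕ) (μ τ κ η β : ℝ≥0) (hμ : 0 < μ) (hβ : β < 1) (x0 : ℕ) :
    ∀ n : ℕ, ∀ h ∈ (cpClassicalPath G μ (μ*(1-β)*τ) (μ*(1-β)*κ) β x0
        (μ * (τ + (1-β) * η)) n).support, μ * τ ≤ h.2.2 := by
  intro n
  induction n with
  | zero =>
    intro h hh
    simp only [cpClassicalPath, PMF.support_pure, Set.mem_singleton_iff] at hh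
    subst hh
    exact mul_le_mul_right le_self_add μ
  | succ n ih =>
    intro h hh
    simp only [cpClassicalPath, PMF.mem_support_bind_iff, PMF.mem_support_map_iff] at hh
    obtain ⟨h', hh', s', hs', rfl⟩ := hh
    simp only [cpClassicalStep, PMF.mem_support_bind_iff, PMF.mem_support_map_iff] at hs'
    obtain ⟨m, hm, x', hx', rfl⟩ := hs'
    exact ar3 hμ hβ h'.2.1 (ih h' hh')

lemma main_inv (G : PMF ℕ) (μ τ κ η β : ℝ≥0) (hμ : 0 < μ) (hβ : β < 1)
    (hb : (β:ℝ≥0∞) ≤ 1) (x0 : ℕ) :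
    ∀ n : ℕ, cpThinPath G τ κ η (β:ℝ≥0∞) hb x0 n
      = (cpClassicalPath G μ (μ*(1-β)*τ) (μ*(1-β)*κ) β x0 (μ * (τ + (1-β) * η)) n).bind
          (fun h => (poissonPMF (gfun μ τ β h.2.2)).map (fun l => (h.1, (h.2.1, l)))) := by
  intro n
  induction n with
  | zero =>
    simp only [cpThinPath, cpClassicalPath, cpThinInit, PMF.pure_bind]
    simp only [PMF.map_bind, PMF.map_comp, Function.comp_def]
    simp only [PMF.map, Function.comp_def]
    rw [pois_thin_bind η β hβ.le hb (fun l a => PMF.pure ([x0], (x0, l)))]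
    simp only [PMF.bind_const]
    rw [ar0 hμ hβ]
  | succ n ih =>
    simp only [cpThinPath, cpClassicalPath]
    rw [ih]
    simp only [PMF.bind_bind, PMF.bind_map, Function.comp_def]
    refine pmf_bind_congr _ _ _ fun h hh => ?_
    have hlam : μ * τ ≤ h.2.2 := classical_support_lam G μ τ κ η β hμ hβ x0 n h hh
    have := core_step G μ τ κ β hμ hβ hb
      (fun x' l' => (h.1 ++ [x'], (x', l'))) h.2.1 h.2.2 hlam
    convert this using 2


/-- Equivalence of the thinning-based and classical compound Poisson INGARCH(1,1) models:
if `G` has finite mean `μ > 0` then, with `ν = μ(1-β)τ`, `α = μ(1-β)κ` and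
`λ₀ = μ(τ + (1-β)η)`, the laws of the trajectories `(X₀, …, Xₙ)` of the two processes
coincide for every `n`, i.e. the two processes have the same distribution. -/
theorem cp_ingarch11_thinning_equivalence
    (G : PMF ℕ) (μ : ℝ≥0) (hμ : 0 < μ) (hGmean : ∑' k : ℕ, (k : ℝ≥0∞) * G k = (μ : ℝ≥0∞))
    (τ κ η β : ℝ≥0) (hτ : 0 < τ) (hκ : 0 < κ) (hη : 0 < η) (hβ : β < 1) (x0 : ℕ) :
    ∀ n : ℕ,
      (cpThinPath G τ κ η (β : ℝ≥0∞) (by exact_mod_cast hβ.le) x0 n).map Prod.fst =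
      (cpClassicalPath G μ (μ * (1 - β) * τ) (μ * (1 - β) * κ) β x0
        (μ * (τ + (1 - β) * η)) n).map Prod.fst := by
  intro n
  rw [main_inv G μ τ κ η β hμ hβ (by exact_mod_cast hβ.le) x0 n]
  simp only [PMF.map_bind, PMF.map_comp, Function.comp_def]
  simp only [PMF.map, Function.comp_def, PMF.bind_const]
end

section
/- Galton–Watson representation of the exposed process in the CP thinning model: let G be a probability distribution on ℕ, τ > 0, κ > 0, 0 ≤ β < 1. For e ∈ ℕ, consider the one-step transition of the thinning-based CP-INGARCH(1,1) model from E = e: draw L ~ Binomial(e, β), set A = e − L, draw I ~ Poisson(τ) independently, set X = Σ_{i=1}^{I + A} Z_i with Z_i i.i.d. ~ G, draw C given X as Poisson(κ·X) (i.e., C = κ ⋆ X), and set E' = L + C. Then the distribution of E' equals the distribution of Σ_{k=1}^{e} B_k + I*, where the B_k are i.i.d. copies of the offspring variable B (B = 1 with probability β, and with probability 1 − β, B = κ ⋆ (ψ *_G 1), i.e. B = Σ_{i=1}^{Z} P_i with Z ~ G and the P_i i.i.d. Poisson(κ)), I* is the immigration variable κ ⋆ (ψ *_G I) with I ~ Poisson(τ),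 and B_1, …, B_e, I* are mutually independent. -/
open ProbabilityTheory
open scoped NNReal ENNReal

/-- The offspring distribution of the Galton–Watson representation: `B = 1` with probability
`β`, and with probability `1 - β`, `B = κ ⋆ (ψ *_G 1)`, i.e. `B | Z ~ Pois(κ·Z)` with
`Z ~ G` (a sum of `Z` i.i.d. Poisson(κ) variables). -/
noncomputable def offspring (G : PMF ℕ) (κ : ℝ≥0) (b : ℝ≥0∞) (hb : b ≤ 1) : PMF ℕ :=
  (PMF.bernoulli b.toNNReal (by simpa using ENNReal.toNNReal_mono ENNReal.one_ne_top hb)).bind fun coin =>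
    if coin then PMF.pure 1 else G.bind fun z => poissonPMF (κ * z)

/-- The sum of `e` i.i.d. draws from the offspring distribution. -/
noncomputable def offspringSum (G : PMF ℕ) (κ : ℝ≥0) (b : ℝ≥0∞) (hb : b ≤ 1) :
    ℕ → PMF ℕ
  | 0 => PMF.pure 0
  | e + 1 => (offspringSum G κ b hb e).bind fun s =>
      (offspring G κ b hb).map fun x => s + x

/-- The immigration distribution `I* = κ ⋆ (ψ *_G I)` with `I ~ Pois(τ)`: draw
`I ~ Pois(τ)`, then `Y = ψ *_G I`, then `I* | Y ~ Pois(κ·Y)`. -/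
noncomputable def immigration (G : PMF ℕ) (τ κ : ℝ≥0) : PMF ℕ :=
  (poissonPMF τ).bind fun i => (compG G i).bind fun y => poissonPMF (κ * y)

namespace CPGW

/-- Convolution of two PMFs on ℕ. -/
noncomputable def conv (p q : PMF ℕ) : PMF ℕ :=
  p.bind fun a => q.bind fun b => PMF.pure (a + b)

lemma conv_eq_bind_map (p q : PMF ℕ) : conv p q = p.bind fun a => q.map fun c => a + c := rfl

lemma bind_congr' {α β : Type*} (p : PMF α) (f g : α → PMF β)
    (h : ∀ a ∈ p.support, f a = g a) : p.bind f = p.bind g := by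
  ext b
  simp only [PMF.bind_apply]
  refine tsum_congr fun a => ?_
  by_cases ha : p a = 0
  · simp [ha]
  · rw [h a ha]

lemma conv_comm (p q : PMF ℕ) : conv p q = conv q p := by
  rw [conv, conv, PMF.bind_comm]
  simp only [add_comm]

lemma conv_assoc (p q r : PMF ℕ) : conv (conv p q) r = conv p (conv q r) := by
  simp only [conv, PMF.bind_bind, PMF.pure_bind, add_assoc]

lemma pure_conv_pure (a b : ℕ) : conv (PMF.pure a) (PMF.pure b) = PMF.pure (a + b) := by
  rw [conv, PMF.pure_bind, PMF.pure_bind]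

lemma bind_conv_left {α : Type*} (p : PMF α) (f : α → PMF ℕ) (q : PMF ℕ) :
    conv (p.bind f) q = p.bind fun a => conv (f a) q := by
  simp only [conv, PMF.bind_bind]

lemma bind_conv_right {α : Type*} (p : PMF ℕ) (q : PMF α) (f : α → PMF ℕ) :
    conv p (q.bind f) = q.bind fun b => conv p (f b) := by
  simp only [conv, PMF.bind_bind]
  exact PMF.bind_comm p q _

lemma conv_apply (p q : PMF ℕ) (n : ℕ) :
    conv p q n = ∑ a ∈ Finset.range (n+1), p a * q (n - a) := by
  rw [conv, PMF.bind_apply]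
  rw [tsum_eq_sum (s := Finset.range (n+1)) ?_]
  · refine Finset.sum_congr rfl fun a ha => ?_
    rw [Finset.mem_range, Nat.lt_succ_iff] at ha
    congr 1
    rw [PMF.bind_apply]
    rw [tsum_eq_single (n - a)]
    · simp [PMF.pure_apply, Nat.add_sub_cancel' ha]
    · intro b hb
      rw [PMF.pure_apply, if_neg, mul_zero]
      omega
  · intro a ha
    rw [Finset.mem_range, Nat.lt_succ_iff] at ha
    rw [PMF.bind_apply]
    convert mul_zero _
    rw [ENNReal.tsum_eq_zero]
    intro b
    rw [PMF.pure_apply, if_neg, mul_zero]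
    omega

lemma poissonPMF_apply' (r : ℝ≥0) (n : ℕ) :
    poissonPMF r n = ENNReal.ofReal (poissonPMFReal r n) := rfl

lemma poisson_real_conv (r s : ℝ≥0) (n : ℕ) :
    ∑ a ∈ Finset.range (n+1), poissonPMFReal r a * poissonPMFReal s (n - a)
      = poissonPMFReal (r + s) n := by
  unfold poissonPMFReal
  push_cast
  rw [neg_add, Real.exp_add]
  rw [add_pow (r:ℝ) (s:ℝ) n]
  rw [Finset.mul_sum, Finset.sum_div]
  refine Finset.sum_congr rfl fun a ha => ?_
  rw [Finset.mem_range, Nat.lt_succ_iff] at ha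
  have hfact : ((n.choose a : ℝ)) * a.factorial * (n - a).factorial = n.factorial := by
    exact_mod_cast congrArg (Nat.cast : ℕ → ℝ) (Nat.choose_mul_factorial_mul_factorial ha)
  have h1 : (a.factorial : ℝ) ≠ 0 := by positivity
  have h2 : ((n - a).factorial : ℝ) ≠ 0 := by positivity
  have h3 : (n.factorial : ℝ) ≠ 0 := by positivity
  field_simp
  rw [← hfact]; ring

lemma poisson_conv (r s : ℝ≥0) :
    conv (poissonPMF r) (poissonPMF s) = poissonPMF (r + s) := by
  ext n
  rw [conv_apply, poissonPMF_apply', ← poisson_real_conv r s n,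
    ENNReal.ofReal_sum_of_nonneg (fun a _ => mul_nonneg poissonPMFReal_nonneg
      poissonPMFReal_nonneg)]
  refine Finset.sum_congr rfl fun a _ => ?_
  rw [poissonPMF_apply', poissonPMF_apply',
    ENNReal.ofReal_mul poissonPMFReal_nonneg]

lemma poisson_zero : poissonPMF 0 = PMF.pure 0 := by
  ext n
  rw [poissonPMF_apply', PMF.pure_apply]
  cases n with
  | zero => simp [poissonPMFReal]
  | succ j => simp [poissonPMFReal]

lemma binThin_apply (b : ℝ≥0∞) (hb : b ≤ 1) (n k : ℕ) :
    binThin b hb n k = b ^ k * (1 - b) ^ (n - k) * (n.choose k) := by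
  rw [binThin, PMF.map_apply]
  by_cases hk : k ≤ n
  · rw [tsum_eq_single (⟨k, Nat.lt_succ_of_le hk⟩ : Fin (n+1))]
    · rw [if_pos rfl]; erw [PMF.binomial_apply]
      rw [ENNReal.coe_toNNReal (ne_top_of_le_ne_top ENNReal.one_ne_top hb)]
      rfl
    · intro i hi
      rw [if_neg]
      intro h
      exact hi (Fin.ext h.symm)
  · rw [Nat.choose_eq_zero_of_lt (by omega), Nat.cast_zero, mul_zero]
    rw [ENNReal.tsum_eq_zero]
    intro i
    rw [if_neg]
    omega

lemma binThin_zero (b : ℝ≥0∞) (hb : b ≤ 1) : binThin b hb 0 = PMF.pure 0 := by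
  ext k
  rw [binThin_apply, PMF.pure_apply]
  cases k with
  | zero => simp
  | succ j => simp [Nat.choose_eq_zero_of_lt]

lemma binThin_support_le (b : ℝ≥0∞) (hb : b ≤ 1) (n : ℕ) {k : ℕ}
    (hk : k ∈ (binThin b hb n).support) : k ≤ n := by
  by_contra h
  rw [PMF.mem_support_iff, binThin_apply, Nat.choose_eq_zero_of_lt (by omega)] at hk
  simp at hk

lemma binThin_succ (b : ℝ≥0∞) (hb : b ≤ 1) (n : ℕ) :
    binThin b hb (n+1) = (binThin b hb n).bind fun l =>
      (PMF.bernoulli b.toNNReal (by simpa using ENNReal.toNNReal_mono ENNReal.one_ne_top hb)).bind fun c => PMF.pure (l + cond c 1 0) := by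
  ext k
  have hinner : ∀ l : ℕ, ((PMF.bernoulli b.toNNReal (by simpa using ENNReal.toNNReal_mono ENNReal.one_ne_top hb)).bind fun c => PMF.pure (l + cond c 1 0)) k
      = (1-b) * (if k = l then 1 else 0) + b * (if k = l + 1 then 1 else 0) := by
    intro l
    rw [PMF.bind_apply, tsum_bool]
    erw [PMF.bernoulli_apply, PMF.bernoulli_apply]
    simp only [PMF.bernoulli_apply, PMF.pure_apply, cond_false, cond_true, add_zero,
      ENNReal.coe_sub, ENNReal.coe_one, ENNReal.coe_toNNReal (ne_top_of_le_ne_top ENNReal.one_ne_top hb)]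
    ring
  rw [PMF.bind_apply]
  have hsplit : ∀ l : ℕ, binThin b hb n l * ((PMF.bernoulli b.toNNReal (by simpa using ENNReal.toNNReal_mono ENNReal.one_ne_top hb)).bind fun c =>
        PMF.pure (l + cond c 1 0)) k
      = binThin b hb n l * ((1-b) * (if k = l then 1 else 0))
        + binThin b hb n l * (b * (if k = l + 1 then 1 else 0)) := by
    intro l; rw [hinner l, mul_add]
  rw [tsum_congr hsplit, ENNReal.tsum_add]
  have h1 : (∑' l : ℕ, binThin b hb n l * ((1-b) * (if k = l then 1 else 0)))
      = binThin b hb n k * (1-b) := by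
    rw [tsum_eq_single k]
    · simp
    · intro l hl; simp [Ne.symm hl]
  rw [h1]
  cases k with
  | zero =>
    have h2 : (∑' l : ℕ, binThin b hb n l * (b * (if 0 = l + 1 then 1 else 0))) = 0 := by
      rw [ENNReal.tsum_eq_zero]; intro l; simp
    rw [h2, add_zero, binThin_apply, binThin_apply]
    simp [mul_comm, pow_succ]
  | succ j =>
    have h2 : (∑' l : ℕ, binThin b hb n l * (b * (if j + 1 = l + 1 then 1 else 0)))
        = binThin b hb n j * b := by
      rw [tsum_eq_single j]
      · simp
      · intro l hl; rw [if_neg (by omega), mul_zero, mul_zero]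
    rw [h2, binThin_apply, binThin_apply, binThin_apply]
    rw [Nat.succ_sub_succ, Nat.choose_succ_succ (n := n) (k := j)]
    by_cases hj : j < n
    · have hsub : n - (j+1) + 1 = n - j := by omega
      push_cast
      rw [mul_add]
      simp only [Nat.succ_eq_add_one]
      rw [show n - j = n - (j+1) + 1 from hsub.symm]
      ring
    · have hc : n.choose (j+1) = 0 := Nat.choose_eq_zero_of_lt (by omega)
      rw [hc]
      push_cast
      rw [mul_add]
      simp [pow_succ]
      ring

section Main

variable (G : PMF ℕ) (κ : ℝ≥0)

/-- The Poisson thinning kernel. -/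
noncomputable def K (x : ℕ) : PMF ℕ := poissonPMF (κ * x)

lemma K_add (a b : ℕ) : K κ (a + b) = conv (K κ a) (K κ b) := by
  rw [K, K, K, poisson_conv]
  congr 1
  push_cast
  ring

lemma thin_conv (p q : PMF ℕ) :
    (conv p q).bind (K κ) = conv (p.bind (K κ)) (q.bind (K κ)) := by
  rw [conv, PMF.bind_bind]
  have h : ∀ a : ℕ, ((q.bind fun b => PMF.pure (a + b)).bind (K κ))
      = conv (K κ a) (q.bind (K κ)) := by
    intro a
    rw [PMF.bind_bind]
    simp only [PMF.pure_bind]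
    rw [bind_congr' _ _ _ (fun b _ => K_add κ a b), ← bind_conv_right]
  rw [bind_congr' _ _ _ fun a _ => h a, ← bind_conv_left]

/-- G-compounding of 1 is `G` itself. -/
lemma compG_one : compG G 1 = G := by
  show (PMF.pure 0).bind (fun s => G.map fun z => s + z) = G
  rw [PMF.pure_bind]
  simp only [zero_add]
  exact PMF.map_id G

lemma compG_succ (n : ℕ) : compG G (n + 1) = conv (compG G n) G := rfl

lemma compG_add (m n : ℕ) : compG G (m + n) = conv (compG G m) (compG G n) := by
  induction n with
  | zero =>
    show compG G m = conv (compG G m) (PMF.pure 0)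
    rw [conv_comm, conv, PMF.pure_bind]
    simp
  | succ n ih =>
    rw [show m + (n+1) = (m + n) + 1 from rfl, compG_succ, ih, conv_assoc, ← compG_succ]

/-- `W a` = `κ ⋆ (ψ *_G a)`. -/
noncomputable def W (a : ℕ) : PMF ℕ := (compG G a).bind (K κ)

lemma W_add (a b : ℕ) : W G κ (a + b) = conv (W G κ a) (W G κ b) := by
  rw [W, compG_add, thin_conv, W, W]

lemma W_zero : W G κ 0 = PMF.pure 0 := by
  rw [W]
  show (PMF.pure 0).bind (K κ) = PMF.pure 0
  rw [PMF.pure_bind, K]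
  simp only [Nat.cast_zero, mul_zero]
  exact poisson_zero

lemma W_one : W G κ 1 = G.bind fun z => poissonPMF (κ * z) := by
  rw [W, compG_one]; rfl

lemma offspring_eq (b : ℝ≥0∞) (hb : b ≤ 1) :
    offspring G κ b hb = (PMF.bernoulli b.toNNReal (by simpa using ENNReal.toNNReal_mono ENNReal.one_ne_top hb)).bind fun c =>
      cond c (PMF.pure 1) (W G κ 1) := by
  rw [offspring]
  refine bind_congr' _ _ _ fun c _ => ?_
  cases c
  · rw [W_one]; rfl
  · rfl

/-- The key Galton–Watson step: thinning `e` exposed individuals and compounding the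
survivors reproduces `e` i.i.d. offspring draws. -/
lemma gw_rep (b : ℝ≥0∞) (hb : b ≤ 1) (e : ℕ) :
    ((binThin b hb e).bind fun l => conv (PMF.pure l) (W G κ (e - l)))
      = offspringSum G κ b hb e := by
  induction e with
  | zero =>
    rw [binThin_zero, PMF.pure_bind]
    show conv (PMF.pure 0) (W G κ 0) = PMF.pure 0
    rw [W_zero, pure_conv_pure]
  | succ e ih =>
    rw [binThin_succ, PMF.bind_bind]
    have hstep : ∀ l ∈ (binThin b hb e).support,
        ((PMF.bernoulli b.toNNReal (by simpa using ENNReal.toNNReal_mono ENNReal.one_ne_top hb)).bind fun c => PMF.pure (l + cond c 1 0)).bind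
            (fun l' => conv (PMF.pure l') (W G κ (e + 1 - l')))
          = conv (conv (PMF.pure l) (W G κ (e - l))) (offspring G κ b hb) := by
      intro l hl
      have hle : l ≤ e := binThin_support_le b hb e hl
      rw [PMF.bind_bind, offspring_eq, bind_conv_right]
      simp only [PMF.pure_bind]
      refine bind_congr' _ _ _ fun c _ => ?_
      cases c
      · -- c = false : no survivor removed, extra compounding
        show conv (PMF.pure (l + 0)) (W G κ (e + 1 - (l + 0)))
          = conv (conv (PMF.pure l) (W G κ (e - l))) (W G κ 1)
        rw [add_zero, show e + 1 - l = (e - l) + 1 from by omega, W_add, conv_assoc]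
      · -- c = true : survivor contributes 1
        show conv (PMF.pure (l + 1)) (W G κ (e + 1 - (l + 1)))
          = conv (conv (PMF.pure l) (W G κ (e - l))) (PMF.pure 1)
        rw [Nat.succ_sub_succ, conv_assoc, conv_comm (W G κ (e - l)) (PMF.pure 1),
          ← conv_assoc, pure_conv_pure]
    rw [bind_congr' _ _ _ hstep, ← bind_conv_left, ih]
    show _ = (offspringSum G κ b hb e).bind fun s =>
      (offspring G κ b hb).map fun x => s + x
    rw [← conv_eq_bind_map]

end Main

end CPGW

open CPGW in
/-- Galton–Watson representation of the exposed process of the thinning-based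
CP-INGARCH(1,1) model. -/
theorem cp_ingarch_galton_watson
    (G : PMF ℕ) (τ κ : ℝ≥0) (hτ : 0 < τ) (hκ : 0 < κ) (β : ℝ≥0) (hβ : β < 1)
    (e : ℕ) :
    ((binThin (β : ℝ≥0∞) (by exact_mod_cast hβ.le) e).bind fun l =>
      (poissonPMF τ).bind fun i =>
        (compG G (i + (e - l))).bind fun x =>
          (poissonPMF (κ * x)).map fun c => l + c) =
    (offspringSum G κ (β : ℝ≥0∞) (by exact_mod_cast hβ.le) e).bind fun s =>
      (immigration G τ κ).map fun istar => s + istar := by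
  have hb : (β : ℝ≥0∞) ≤ 1 := by exact_mod_cast hβ.le
  set b : ℝ≥0∞ := (β : ℝ≥0∞)
  have himm : immigration G τ κ = (poissonPMF τ).bind fun i => W G κ i := rfl
  have hLHS : ∀ l i : ℕ,
      ((compG G (i + (e - l))).bind fun x => (poissonPMF (κ * x)).map fun c => l + c)
        = conv (PMF.pure l) (W G κ (i + (e - l))) := by
    intro l i
    rw [W, bind_conv_right]
    refine bind_congr' _ _ _ fun x _ => ?_
    rw [conv_eq_bind_map, PMF.pure_bind]
    rfl
  calc ((binThin b hb e).bind fun l =>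
      (poissonPMF τ).bind fun i =>
        (compG G (i + (e - l))).bind fun x =>
          (poissonPMF (κ * x)).map fun c => l + c)
      = (binThin b hb e).bind fun l => (poissonPMF τ).bind fun i =>
          conv (PMF.pure l) (W G κ (i + (e - l))) := by
        refine bind_congr' _ _ _ fun l _ => bind_congr' _ _ _ fun i _ => hLHS l i
    _ = (binThin b hb e).bind fun l =>
          conv (conv (PMF.pure l) (W G κ (e - l))) (immigration G τ κ) := by
        refine bind_congr' _ _ _ fun l _ => ?_
        have : ∀ i ∈ (poissonPMF τ).support,
            conv (PMF.pure l) (W G κ (i + (e - l)))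
              = conv (conv (PMF.pure l) (W G κ (e - l))) (W G κ i) := by
          intro i _
          rw [W_add, conv_comm (W G κ i), ← conv_assoc]
        rw [bind_congr' _ _ _ this, himm, bind_conv_right]
    _ = conv ((binThin b hb e).bind fun l => conv (PMF.pure l) (W G κ (e - l)))
          (immigration G τ κ) := by rw [bind_conv_left]
    _ = conv (offspringSum G κ b hb e) (immigration G τ κ) := by rw [gw_rep]
    _ = (offspringSum G κ b hb e).bind fun s =>
          (immigration G τ κ).map fun istar => s + istar := by rw [← conv_eq_bind_map]
end

section
/- Transfer of finite moments to the observed process: let r ≥ 1 be a natural number, let G be a probability distribution on ℕ with finite r-th moment, let τ > 0 and 0 ≤ β < 1. Let E be an ℕ-valued random variable with E[E^r] < ∞, let A = (1 − β) ∘ E (binomial thinning of E with probability 1 − β), let I ~ Poisson(τ) be independent of (E, A), and let X = ψ *_G (I + A) (G-compounding, with the G-draws independent of everything else). Then E[X^r] < ∞. -/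
open ProbabilityTheory
open scoped NNReal ENNReal

noncomputable def mom (r : ℕ) (p : PMF ℕ) : ℝ≥0∞ := ∑' n : ℕ, (n : ℝ≥0∞) ^ r * p n

lemma mom_bind {α : Type*} (r : ℕ) (p : PMF α) (f : α → PMF ℕ) :
    mom r (p.bind f) = ∑' a, p a * mom r (f a) := by
  unfold mom
  simp only [PMF.bind_apply, ← ENNReal.tsum_mul_left]
  rw [ENNReal.tsum_comm]
  congr 1; ext a; congr 1; ext n; ring

lemma mom_pure (r : ℕ) (k : ℕ) : mom r (PMF.pure k) = (k : ℝ≥0∞) ^ r := by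
  unfold mom
  rw [tsum_eq_single k]
  · simp
  · intro b hb; simp [PMF.pure_apply, hb]

lemma mom_map {α : Type*} (r : ℕ) (p : PMF α) (g : α → ℕ) :
    mom r (p.map g) = ∑' a, (g a : ℝ≥0∞) ^ r * p a := by
  rw [PMF.map, mom_bind]
  simp [mom_pure, mul_comm]



lemma poisson_mom_lt_top (r : ℕ) (τ : ℝ≥0) : mom r (poissonPMF τ) < ⊤ := by
  have hnn : ∀ n : ℕ, 0 ≤ (n : ℝ) ^ r * poissonPMFReal τ n :=
    fun n => mul_nonneg (by positivity) poissonPMFReal_nonneg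
  have hg : Summable (fun n : ℕ => Real.exp (-(τ:ℝ)) * ((2 ^ r * (τ:ℝ)) ^ n / (n.factorial : ℝ))) :=
    (Real.summable_pow_div_factorial (2 ^ r * (τ:ℝ))).mul_left _
  have hsum : Summable (fun n : ℕ => (n : ℝ) ^ r * poissonPMFReal τ n) := by
    refine Summable.of_nonneg_of_le hnn (fun n => ?_) hg
    have h1 : (n : ℝ) ^ r ≤ ((2:ℝ) ^ r) ^ n := by
      calc (n:ℝ) ^ r ≤ ((2:ℝ) ^ n) ^ r := by
            apply pow_le_pow_left₀ (Nat.cast_nonneg n)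
            exact_mod_cast (Nat.lt_two_pow_self (n := n)).le
        _ = ((2:ℝ) ^ r) ^ n := by rw [← pow_mul, ← pow_mul, Nat.mul_comm]
    have h2 : Real.exp (-τ) * ((2 ^ r * (τ:ℝ)) ^ n / (n.factorial : ℝ))
        = ((2:ℝ) ^ r) ^ n * poissonPMFReal τ n := by
      unfold poissonPMFReal; rw [mul_pow]; ring
    rw [h2]
    exact mul_le_mul_of_nonneg_right h1 poissonPMFReal_nonneg
  have happ : ∀ n : ℕ, (n : ℝ≥0∞) ^ r * poissonPMF τ n
      = ENNReal.ofReal ((n : ℝ) ^ r * poissonPMFReal τ n) := by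
    intro n
    rw [ENNReal.ofReal_mul (by positivity), ENNReal.ofReal_pow (Nat.cast_nonneg n),
      ENNReal.ofReal_natCast]
    rfl
  unfold mom
  simp only [happ]
  rw [← ENNReal.ofReal_tsum_of_nonneg hnn hsum]
  exact ENNReal.ofReal_lt_top

lemma two_pow_bound (x y : ℝ≥0∞) (r : ℕ) : (x + y) ^ r ≤ 2 ^ r * (x ^ r + y ^ r) := by
  rcases le_total x y with h | h
  · calc (x + y) ^ r ≤ (y + y) ^ r := pow_le_pow_left₀ zero_le (add_le_add_left h y) r
      _ = 2 ^ r * y ^ r := by rw [← two_mul, mul_pow]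
      _ ≤ 2 ^ r * (x ^ r + y ^ r) := mul_le_mul_right le_add_self _
  · calc (x + y) ^ r ≤ (x + x) ^ r := pow_le_pow_left₀ zero_le (add_le_add_right h x) r
      _ = 2 ^ r * x ^ r := by rw [← two_mul, mul_pow]
      _ ≤ 2 ^ r * (x ^ r + y ^ r) := mul_le_mul_right le_self_add _

lemma mom_zero (p : PMF ℕ) : mom 0 p = 1 := by
  unfold mom; simpa using p.tsum_coe

lemma mom_compG_le (r : ℕ) (G : PMF ℕ) (C : ℝ≥0∞) (hC : 1 ≤ C)
    (hG : ∀ j, j ≤ r → mom j G ≤ C) :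
    ∀ n : ℕ, ∀ j, j ≤ r → mom j (compG G n) ≤ ((n : ℝ≥0∞) * C) ^ j := by
  intro n
  induction n with
  | zero =>
    intro j hj
    simp only [compG, mom_pure, Nat.cast_zero, zero_mul]
    exact le_rfl
  | succ n ih =>
    intro j hj
    have hstep : mom j (compG G (n + 1))
        = ∑ i ∈ Finset.range (j + 1),
            ((j.choose i : ℝ≥0∞) * mom (j - i) G) * mom i (compG G n) := by
      rw [show compG G (n + 1) = (compG G n).bind fun s => G.map fun z => s + z from rfl,
        mom_bind]
      have hinner : ∀ s : ℕ, mom j (G.map fun z => s + z)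
          = ∑ i ∈ Finset.range (j + 1),
              (s : ℝ≥0∞) ^ i * ((j.choose i : ℝ≥0∞) * mom (j - i) G) := by
        intro s
        rw [mom_map]
        have hpt : ∀ z : ℕ, ((s + z : ℕ) : ℝ≥0∞) ^ j * G z
            = ∑ i ∈ Finset.range (j + 1),
                ((s : ℝ≥0∞) ^ i * (j.choose i : ℝ≥0∞)) * ((z : ℝ≥0∞) ^ (j - i) * G z) := by
          intro z
          push_cast
          rw [add_pow, Finset.sum_mul]
          exact Finset.sum_congr rfl fun i _ => by ring
        simp only [hpt]
        rw [Summable.tsum_finsetSum (fun i _ => ENNReal.summable)]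
        refine Finset.sum_congr rfl fun i _ => ?_
        rw [ENNReal.tsum_mul_left]
        unfold mom
        ring
      simp only [hinner, Finset.mul_sum]
      rw [Summable.tsum_finsetSum (fun i _ => ENNReal.summable)]
      refine Finset.sum_congr rfl fun i _ => ?_
      have : ∀ s : ℕ, (compG G n) s * ((s : ℝ≥0∞) ^ i * ((j.choose i : ℝ≥0∞) * mom (j - i) G))
          = ((j.choose i : ℝ≥0∞) * mom (j - i) G) * ((s : ℝ≥0∞) ^ i * (compG G n) s) :=
        fun s => by ring
      simp only [this]
      rw [ENNReal.tsum_mul_left]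
      rfl
    rw [hstep]
    calc ∑ i ∈ Finset.range (j + 1),
          ((j.choose i : ℝ≥0∞) * mom (j - i) G) * mom i (compG G n)
        ≤ ∑ i ∈ Finset.range (j + 1),
            ((n : ℝ≥0∞) * C) ^ i * C ^ (j - i) * (j.choose i : ℝ≥0∞) := by
          refine Finset.sum_le_sum fun i hi => ?_
          have hij : i ≤ j := Nat.lt_succ_iff.mp (Finset.mem_range.mp hi)
          have hm : mom (j - i) G ≤ C ^ (j - i) := by
            rcases Nat.eq_or_lt_of_le hij with h | h
            · simp [h, mom_zero]
            · exact le_trans (hG (j - i) (le_trans (Nat.sub_le j i) hj))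
                (le_self_pow₀ hC (by omega))
          have h1 : mom i (compG G n) ≤ ((n : ℝ≥0∞) * C) ^ i := ih i (le_trans hij hj)
          calc ((j.choose i : ℝ≥0∞) * mom (j - i) G) * mom i (compG G n)
              ≤ ((j.choose i : ℝ≥0∞) * C ^ (j - i)) * ((n : ℝ≥0∞) * C) ^ i :=
                mul_le_mul (mul_le_mul_right hm _) h1 zero_le zero_le
            _ = ((n : ℝ≥0∞) * C) ^ i * C ^ (j - i) * (j.choose i : ℝ≥0∞) := by ring
      _ = ((n : ℝ≥0∞) * C + C) ^ j := (add_pow _ _ j).symm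
      _ = (((n : ℕ) + 1 : ℝ≥0∞) * C) ^ j := by rw [add_mul, one_mul]
      _ = (((n + 1 : ℕ) : ℝ≥0∞) * C) ^ j := by push_cast; ring

lemma tsum_aff (p : PMF ℕ) (K P : ℝ≥0∞) (r : ℕ) :
    ∑' x : ℕ, p x * (K * (P + (x : ℝ≥0∞) ^ r)) = K * (P + mom r p) := by
  have h : ∀ x : ℕ, p x * (K * (P + (x : ℝ≥0∞) ^ r))
      = K * P * p x + K * ((x : ℝ≥0∞) ^ r * p x) := fun x => by ring
  simp only [h]
  rw [ENNReal.tsum_add, ENNReal.tsum_mul_left, ENNReal.tsum_mul_left, p.tsum_coe]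
  unfold mom; ring

lemma tsum_aff' (p : PMF ℕ) (K Q : ℝ≥0∞) (r : ℕ) :
    ∑' x : ℕ, p x * (K * ((x : ℝ≥0∞) ^ r + Q)) = K * (mom r p + Q) := by
  have h : ∀ x : ℕ, p x * (K * ((x : ℝ≥0∞) ^ r + Q))
      = K * ((x : ℝ≥0∞) ^ r * p x) + K * Q * p x := fun x => by ring
  simp only [h]
  rw [ENNReal.tsum_add, ENNReal.tsum_mul_left, ENNReal.tsum_mul_left, p.tsum_coe]
  unfold mom; ring

lemma mom_binThin_le (r : ℕ) (b : ℝ≥0∞) (hb : b ≤ 1) (e : ℕ) :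
    mom r (binThin b hb e) ≤ (e : ℝ≥0∞) ^ r := by
  rw [binThin, mom_map]
  calc ∑' x : Fin (e + 1), ((x : ℕ) : ℝ≥0∞) ^ r * (PMF.binomial b.toNNReal (by simpa using ENNReal.toNNReal_mono ENNReal.one_ne_top hb) e) x
      ≤ ∑' x : Fin (e + 1), (e : ℝ≥0∞) ^ r * (PMF.binomial b.toNNReal (by simpa using ENNReal.toNNReal_mono ENNReal.one_ne_top hb) e) x := by
        refine ENNReal.tsum_le_tsum fun x => mul_le_mul_left ?_ _
        exact pow_le_pow_left₀ zero_le
          (by exact_mod_cast Nat.lt_succ_iff.mp x.isLt) r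
    _ = (e : ℝ≥0∞) ^ r := by
        rw [ENNReal.tsum_mul_left, (PMF.binomial b.toNNReal (by simpa using ENNReal.toNNReal_mono ENNReal.one_ne_top hb) e).tsum_coe, mul_one]

/-- Transfer of finite moments to the observed process: if `E` has a finite `r`-th moment
(`r ≥ 1`) and `G` has a finite `r`-th moment, then `X = ψ *_G (I + A)` — where
`A = (1-β) ∘ E` is a binomial thinning of `E` and `I ~ Pois(τ)` is independent of `(E, A)`,
with the `G`-draws independent of everything else — has a finite `r`-th moment. -/
theorem cp_ingarch_moment_transfer
    (r : ℕ) (hr : 1 ≤ r)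
    (G : PMF ℕ) (hGr : ∑' k : ℕ, (k : ℝ≥0∞) ^ r * G k < ⊤)
    (τ : ℝ≥0) (hτ : 0 < τ) (β : ℝ≥0) (hβ : β < 1)
    (pE : PMF ℕ) (hEr : ∑' n : ℕ, (n : ℝ≥0∞) ^ r * pE n < ⊤) :
    ∑' n : ℕ, (n : ℝ≥0∞) ^ r *
      (pE.bind fun e =>
        (binThin (1 - (β : ℝ≥0∞)) tsub_le_self e).bind fun a =>
          (poissonPMF τ).bind fun i => compG G (i + a)) n < ⊤ := by
  set C : ℝ≥0∞ := 1 + mom r G with hCdef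
  have hGfin : mom r G < ⊤ := hGr
  have hC1 : (1 : ℝ≥0∞) ≤ C := le_self_add
  have hCt : C ≠ ⊤ := by
    rw [hCdef]; exact ENNReal.add_ne_top.mpr ⟨ENNReal.one_ne_top, hGfin.ne⟩
  have hG : ∀ j, j ≤ r → mom j G ≤ C := by
    intro j hj
    have hpt : ∀ n : ℕ, (n : ℝ≥0∞) ^ j * G n ≤ (1 + (n : ℝ≥0∞) ^ r) * G n := by
      intro n
      refine mul_le_mul_left ?_ _
      rcases Nat.eq_zero_or_pos n with h | h
      · subst h
        simp only [Nat.cast_zero]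
        exact le_trans (zero_pow_le_one j) le_self_add
      · have h1 : (1 : ℝ≥0∞) ≤ (n : ℝ≥0∞) := by exact_mod_cast h
        exact le_trans (pow_le_pow_right₀ h1 hj) le_add_self
    calc mom j G ≤ ∑' n : ℕ, (1 + (n : ℝ≥0∞) ^ r) * G n := ENNReal.tsum_le_tsum hpt
      _ = 1 + mom r G := by
          simp only [add_mul, one_mul]
          rw [ENNReal.tsum_add, G.tsum_coe]; rfl
  set P : ℝ≥0∞ := mom r (poissonPMF τ) with hPdef
  set K : ℝ≥0∞ := C ^ r * 2 ^ r with hKdef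
  have hcomp : ∀ i a : ℕ, mom r (compG G (i + a)) ≤ K * ((i : ℝ≥0∞) ^ r + (a : ℝ≥0∞) ^ r) := by
    intro i a
    calc mom r (compG G (i + a)) ≤ (((i + a : ℕ) : ℝ≥0∞) * C) ^ r :=
          mom_compG_le r G C hC1 hG (i + a) r le_rfl
      _ = ((i : ℝ≥0∞) + (a : ℝ≥0∞)) ^ r * C ^ r := by push_cast; rw [mul_pow]
      _ ≤ 2 ^ r * ((i : ℝ≥0∞) ^ r + (a : ℝ≥0∞) ^ r) * C ^ r :=
          mul_le_mul_left (two_pow_bound _ _ r) _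
      _ = K * ((i : ℝ≥0∞) ^ r + (a : ℝ≥0∞) ^ r) := by rw [hKdef]; ring
  have h1 : ∀ a : ℕ, ∑' i : ℕ, poissonPMF τ i * mom r (compG G (i + a))
      ≤ K * (P + (a : ℝ≥0∞) ^ r) := by
    intro a
    calc ∑' i : ℕ, poissonPMF τ i * mom r (compG G (i + a))
        ≤ ∑' i : ℕ, poissonPMF τ i * (K * ((i : ℝ≥0∞) ^ r + (a : ℝ≥0∞) ^ r)) :=
          ENNReal.tsum_le_tsum fun i => mul_le_mul_right (hcomp i a) _
      _ = K * (P + (a : ℝ≥0∞) ^ r) := tsum_aff' (poissonPMF τ) K _ r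
  show mom r (pE.bind fun e =>
        (binThin (1 - (β : ℝ≥0∞)) tsub_le_self e).bind fun a =>
          (poissonPMF τ).bind fun i => compG G (i + a)) < ⊤
  rw [mom_bind]
  calc ∑' e : ℕ, pE e * mom r ((binThin (1 - (β : ℝ≥0∞)) tsub_le_self e).bind fun a =>
          (poissonPMF τ).bind fun i => compG G (i + a))
      ≤ ∑' e : ℕ, pE e * (K * (P + (e : ℝ≥0∞) ^ r)) := by
        refine ENNReal.tsum_le_tsum fun e => mul_le_mul_right ?_ _
        rw [mom_bind]
        calc ∑' a : ℕ, binThin (1 - (β : ℝ≥0∞)) tsub_le_self e a *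
              mom r ((poissonPMF τ).bind fun i => compG G (i + a))
            ≤ ∑' a : ℕ, binThin (1 - (β : ℝ≥0∞)) tsub_le_self e a *
                (K * (P + (a : ℝ≥0∞) ^ r)) := by
              refine ENNReal.tsum_le_tsum fun a => mul_le_mul_right ?_ _
              rw [mom_bind]
              exact h1 a
          _ = K * (P + mom r (binThin (1 - (β : ℝ≥0∞)) tsub_le_self e)) :=
              tsum_aff _ K P r
          _ ≤ K * (P + (e : ℝ≥0∞) ^ r) :=
              mul_le_mul_right (add_le_add_right (mom_binThin_le r _ _ e) P) K
    _ = K * (P + mom r pE) := tsum_aff pE K P r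
    _ < ⊤ := by
        have hK : K ≠ ⊤ := by
          rw [hKdef]
          exact ENNReal.mul_ne_top (ENNReal.pow_ne_top hCt)
            (ENNReal.pow_ne_top ENNReal.ofNat_ne_top)
        have hP : P ≠ ⊤ := (poisson_mom_lt_top r τ).ne
        have hE : mom r pE ≠ ⊤ := hEr.ne
        exact ENNReal.mul_lt_top hK.lt_top (ENNReal.add_ne_top.mpr ⟨hP, hE⟩).lt_top
end
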